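/- arXiv:1501.00288 — 5 statements merged into one kernel-verified Lean document; each statement's English description precedes it below -/
import Mathlib

section
/- Let G be a finite simple graph admitting a tree-decomposition of width Z. Then there exist a finite simple graph Ḡ in which every vertex has degree at most 3, and a surjective map φ : V(Ḡ) → V(G) such that: (i) for every u ∈ V(G), the fiber φ^{-1}(u) induces a connected acyclic subgraph (a tree) of Ḡ; (ii) every edge of Ḡ joining two distinct fibers φ^{-1}(u), φ^{-1}(v) satisfies that {u, v} is an edge of G, and for every edge {u, v} of G there is exactly one edge of Ḡ joining φ^{-1}(u) and φ^{-1}(v); and (iii) Ḡ admits a tree-decomposition of width at most 2Z + 1. -/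
/-- Tree-decomposition of a graph `H`: `T` is a tree, for every vertex of `H` the set of bags
containing it induces a (nonempty) connected subgraph of `T`, and each edge of `H` is contained
in some bag. -/
def IsTreeDecomp {V τ : Type} (H : SimpleGraph V) (T : SimpleGraph τ) (Q : τ → Finset V) : Prop :=
  T.IsTree ∧ (∀ v : V, (T.induce {t | v ∈ Q t}).Connected) ∧
    (∀ u v : V, H.Adj u v → ∃ t, u ∈ Q t ∧ v ∈ Q t)


section AuxTrees
open SimpleGraph

variable {α : Type}

lemma head_eq_getLast_length {l : List α} (hn : l.Nodup) (hne : l ≠ [])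
    (h : l.head hne = l.getLast hne) : l.length = 1 := by
  match l with
  | [x] => rfl
  | x :: y :: ys =>
    exfalso
    have hmem : (x :: y :: ys).getLast (by simp) ∈ y :: ys := by
      rw [List.getLast_cons (by simp)]
      exact List.getLast_mem _
    rw [List.head_cons] at h
    rw [← h] at hmem
    exact (List.nodup_cons.mp hn).1 hmem

/-- In a cycle at `m`, there are two distinct neighbours of `m` in the support. -/
lemma cycle_two_nbrs {G : SimpleGraph α} {m : α} (c : G.Walk m m) (hc : c.IsCycle) :
    ∃ b p, b ≠ p ∧ G.Adj m b ∧ G.Adj m p ∧ b ∈ c.support ∧ p ∈ c.support := by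
  classical
  have hlen : 3 ≤ c.length := hc.three_le_length
  have hd : c.darts ≠ [] := by
    have := c.length_darts
    intro h; rw [h] at this; simp at this; omega
  set d0 := c.darts.head hd with hd0
  set dL := c.darts.getLast hd with hdL
  have hfst : d0.fst = m := by simp [hd0]
  have hsnd : dL.snd = m := by simp [hdL]
  refine ⟨d0.snd, dL.fst, ?_, ?_, ?_, ?_, ?_⟩
  · intro hbp
    have he : d0.edge = dL.edge := by
      unfold Dart.edge
      rw [hfst, hsnd, hbp]
      exact Sym2.eq_swap
    have hedges : c.edges ≠ [] := by
      intro h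
      have := c.length_edges
      rw [h] at this; simp at this; omega
    have h1 : c.edges.head hedges = d0.edge := by
      simp only [SimpleGraph.Walk.edges, List.head_map, hd0]
    have h2 : c.edges.getLast hedges = dL.edge := by
      simp only [SimpleGraph.Walk.edges, List.getLast_map, hdL]
    have := head_eq_getLast_length hc.edges_nodup hedges (by rw [h1, h2, he])
    rw [c.length_edges] at this; omega
  · rw [← hfst]; exact d0.adj
  · rw [← hsnd]; exact (dL.adj).symm
  · exact c.dart_snd_mem_support_of_mem_darts (List.head_mem hd)
  · exact c.dart_fst_mem_support_of_mem_darts (List.getLast_mem hd)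

/-- The graph defined by a parent function. -/
def pgraph (P : α → Option α) : SimpleGraph α where
  Adj a b := a ≠ b ∧ (P a = some b ∨ P b = some a)
  symm := ⟨by rintro a b ⟨h1, h2⟩; exact ⟨h1.symm, h2.symm⟩⟩
  loopless := ⟨by rintro a ⟨h1, _⟩; exact h1 rfl⟩

variable (P : α → Option α) (f : α → ℕ)

lemma pgraph_adj (hdec : ∀ a b, P a = some b → f b < f a) {a b : α}
    (h : P a = some b ∨ P b = some a) : (pgraph P).Adj a b := by
  refine ⟨?_, h⟩
  rintro rfl
  rcases h with h | h <;> exact absurd (hdec _ _ h) (lt_irrefl _)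

lemma pgraph_isAcyclic (hdec : ∀ a b, P a = some b → f b < f a) :
    (pgraph P).IsAcyclic := by
  intro v c hc
  classical
  obtain ⟨m, hm, hmax⟩ := (c.support.toFinset).exists_max_image f
    ⟨v, by simp [c.start_mem_support]⟩
  rw [List.mem_toFinset] at hm
  have hmax' : ∀ x ∈ c.support, f x ≤ f m := fun x hx => hmax x (List.mem_toFinset.mpr hx)
  set c' := c.rotate m hm with hc'
  have hcyc : c'.IsCycle := hc.rotate hm
  have hsub : ∀ x ∈ c'.support, x ∈ c.support := by
    intro x hx
    rw [Walk.support_eq_cons] at hx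
    rcases List.mem_cons.mp hx with rfl | hx
    · exact hm
    · exact List.mem_of_mem_tail ((Walk.support_rotate c m hm).mem_iff.mp hx)
  obtain ⟨b, p, hbp, hab, hap, hbs, hps⟩ := cycle_two_nbrs c' hcyc
  have hParent : ∀ x, (pgraph P).Adj m x → x ∈ c'.support → P m = some x := by
    intro x hadj hxs
    rcases hadj.2 with h | h
    · exact h
    · exact absurd (hdec _ _ h) (not_lt.mpr (hmax' x (hsub x hxs)))
  have hb := hParent b hab hbs
  have hp := hParent p hap hps
  rw [hb] at hp
  exact hbp (Option.some_injective _ hp)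

lemma pgraph_connected (root : α)
    (hdec : ∀ a b, P a = some b → f b < f a)
    (huniq : ∀ a, P a = none → a = root) : (pgraph P).Connected := by
  have hreach : ∀ N a, f a ≤ N → (pgraph P).Reachable a root := by
    intro N
    induction N with
    | zero =>
      intro a ha
      cases hP : P a with
      | none => rw [huniq a hP]
      | some b => exact absurd (hdec a b hP) (by omega)
    | succ N ih =>
      intro a ha
      cases hP : P a with
      | none => rw [huniq a hP]
      | some b =>
        exact (pgraph_adj P f hdec (Or.inl hP)).reachable.trans
          (ih b (by have := hdec a b hP; omega))
  exact (SimpleGraph.connected_iff _).mpr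
    ⟨fun a b => (hreach _ a le_rfl).trans (hreach _ b le_rfl).symm, ⟨root⟩⟩

lemma pgraph_isTree (root : α)
    (hdec : ∀ a b, P a = some b → f b < f a)
    (huniq : ∀ a, P a = none → a = root) : (pgraph P).IsTree :=
  ⟨pgraph_connected P f root hdec huniq, pgraph_isAcyclic P f hdec⟩

end AuxTrees

section AuxOrder
open SimpleGraph

lemma exists_order {τ : Type} [Fintype τ] [DecidableEq τ] (T : SimpleGraph τ) (hT : T.Connected) :
    ∃ (eq : Fin (Fintype.card τ) ≃ τ) (par : Fin (Fintype.card τ) → Fin (Fintype.card τ)),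
      ∀ i : Fin (Fintype.card τ), i.val ≠ 0 → (par i).val < i.val ∧ T.Adj (eq (par i)) (eq i) := by
  classical
  set n := Fintype.card τ with hn
  have hnpos : 0 < n := Fintype.card_pos_iff.mpr hT.nonempty
  have key : ∀ m : ℕ, m + 1 ≤ n → ∃ l : List τ, l.Nodup ∧ l.length = m + 1 ∧
      ∀ k (hk : k < l.length), k ≠ 0 → ∃ j, ∃ hj : j < l.length, j < k ∧ T.Adj l[j] l[k] := by
    intro m
    induction m with
    | zero =>
      intro _
      obtain ⟨t0⟩ := hT.nonempty
      exact ⟨[t0], by simp, by simp,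
        fun k hk hk0 => absurd (Nat.lt_one_iff.mp (by simpa using hk)) hk0⟩
    | succ m ih =>
      intro hm
      obtain ⟨l, hnd, hlen, hprop⟩ := ih (by omega)
      have hne : l ≠ [] := by intro h; rw [h] at hlen; simp at hlen
      have hex : ∃ b, b ∉ l := by
        by_contra h
        push_neg at h
        have h1 : (Finset.univ : Finset τ) ⊆ l.toFinset := fun b _ => List.mem_toFinset.mpr (h b)
        have := Finset.card_le_card h1
        have h2 := l.toFinset_card_le
        rw [hlen] at h2
        simp only [Finset.card_univ, ← hn] at this
        omega
      obtain ⟨b₀, hb₀⟩ := hex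
      obtain ⟨w⟩ := hT.preconnected (l.head hne) b₀
      obtain ⟨d, _, hdf, hds⟩ := w.exists_boundary_dart {x | x ∈ l} (List.head_mem hne) hb₀
      refine ⟨l ++ [d.snd], ?_, by simp [hlen], ?_⟩
      · rw [List.nodup_append]
        exact ⟨hnd, by simp, by intro a ha b hb; simp at hb; subst hb; exact fun h => hds (h ▸ ha)⟩
      · intro k hk hk0
        simp only [List.length_append, List.length_cons, List.length_nil, hlen] at hk
        by_cases hkl : k < l.length
        · obtain ⟨j, hj, hjk, hadj⟩ := hprop k hkl hk0
          refine ⟨j, by simp; omega, hjk, ?_⟩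
          rwa [List.getElem_append_left hj, List.getElem_append_left hkl]
        · have hkeq : k = l.length := by omega
          have hjlt : l.idxOf d.fst < l.length := List.idxOf_lt_length_iff.mpr hdf
          refine ⟨l.idxOf d.fst, by simp; omega, by omega, ?_⟩
          subst hkeq
          rw [List.getElem_append_left hjlt, List.getElem_append_right (le_refl _),
            List.getElem_idxOf hjlt]
          simpa using d.adj
  obtain ⟨l, hnd, hlen, hprop⟩ := key (n - 1) (by omega)
  have hlen' : l.length = n := by omega
  have hinj : Function.Injective (fun i : Fin n => l[(i : ℕ)]'(by omega)) := by
    intro i j h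
    simp only at h
    exact Fin.ext (hnd.getElem_inj_iff.mp h)
  have hbij : Function.Bijective (fun i : Fin n => l[(i : ℕ)]'(by omega)) :=
    (Fintype.bijective_iff_injective_and_card _).mpr ⟨hinj, by simp [hn]⟩
  refine ⟨Equiv.ofBijective _ hbij,
    fun i => if h : i.val = 0 then ⟨0, hnpos⟩ else
      ⟨(hprop i (by omega) h).choose, by
        obtain ⟨hj, hjk, _⟩ := (hprop i (by omega) h).choose_spec; omega⟩, ?_⟩
  intro i hi
  simp only []
  rw [dif_neg hi]
  obtain ⟨hj, hjk, hadj⟩ := (hprop i (by omega) hi).choose_spec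
  exact ⟨hjk, hadj⟩

end AuxOrder

open SimpleGraph
set_option linter.unusedSectionVars false

namespace GVS

variable {E : Type} [Fintype E] [DecidableEq E] {n : ℕ}

/-- Node type for the refined tree: anchors, ports, and edge slots. -/
abbrev Sig (n : ℕ) (E : Type) : Type := (Fin n ⊕ Fin n) ⊕ E

@[simp] abbrev anc (i : Fin n) : Sig n E := Sum.inl (Sum.inl i)
@[simp] abbrev prt (j : Fin n) : Sig n E := Sum.inl (Sum.inr j)
@[simp] abbrev slt (d : E) : Sig n E := Sum.inr d

variable (par : Fin n → Fin n) (κ : E → Fin n)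

def nodeOf : Sig n E → Fin n
  | .inl (.inl i) => i
  | .inl (.inr j) => par j
  | .inr d => κ d

@[simp] lemma nodeOf_anc (i : Fin n) : nodeOf par κ (anc (E := E) i) = i := rfl
@[simp] lemma nodeOf_prt (j : Fin n) : nodeOf par κ (prt (E := E) j) = par j := rfl
@[simp] lemma nodeOf_slt (d : E) : nodeOf par κ (slt (n := n) d) = κ d := rfl

/-- The chain of slots belonging to node `i`. -/
noncomputable def chainL (i : Fin n) : List (Sig n E) :=
  anc i :: (((List.finRange n).filter (fun j => par j = i)).map (fun j => prt j)
    ++ ((Finset.univ : Finset E).toList.filter (fun d => κ d = i)).map (fun d => slt d))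

lemma mem_chainL {s : Sig n E} {i : Fin n} : s ∈ chainL par κ i ↔ nodeOf par κ s = i := by
  rcases s with (j | j) | d <;> simp [chainL, nodeOf]

lemma nodup_chainL (i : Fin n) : (chainL par κ i).Nodup := by
  refine List.nodup_cons.mpr ⟨by simp, ?_⟩
  rw [List.nodup_append]
  refine ⟨?_, ?_, ?_⟩
  · exact ((List.nodup_finRange n).filter _).map (fun a b h => by simpa using h)
  · exact ((Finset.univ.nodup_toList).filter _).map (fun a b h => by simpa using h)
  · rintro x hx y hy rfl
    simp only [List.mem_map] at hx hy
    obtain ⟨a, _, rfl⟩ := hx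
    obtain ⟨b, _, h⟩ := hy
    exact absurd h (by simp)

/-- Position of a slot in its chain. -/
noncomputable def posOf (s : Sig n E) : ℕ :=
  @List.idxOf _ instBEqOfDecidableEq s (chainL par κ (nodeOf par κ s))

lemma mem_chain_self (s : Sig n E) : s ∈ chainL par κ (nodeOf par κ s) :=
  (mem_chainL par κ).mpr rfl

lemma posOf_lt (s : Sig n E) : posOf par κ s < (chainL par κ (nodeOf par κ s)).length := by
  unfold posOf
  letI : BEq (Sig n E) := instBEqOfDecidableEq
  exact List.idxOf_lt_length_iff.mpr (mem_chain_self par κ s)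

lemma chain_getElem_posOf (s : Sig n E) :
    (chainL par κ (nodeOf par κ s))[posOf par κ s]'(posOf_lt par κ s) = s := by
  unfold posOf
  letI : BEq (Sig n E) := instBEqOfDecidableEq
  exact List.getElem_idxOf _

@[simp] lemma posOf_anc (i : Fin n) : posOf par κ (anc (E := E) i) = 0 := by
  unfold posOf
  simp only [nodeOf_anc, chainL]
  letI : BEq (Sig n E) := instBEqOfDecidableEq
  exact List.idxOf_cons_self

lemma posOf_pos {s : Sig n E} (h : ∀ i, s ≠ anc i) : 0 < posOf par κ s := by
  unfold posOf
  rw [show chainL par κ (nodeOf par κ s) = anc (nodeOf par κ s) :: _ from rfl]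
  letI : BEq (Sig n E) := instBEqOfDecidableEq
  rw [List.idxOf_cons_ne _ (Ne.symm (h _))]
  omega

lemma posOf_eq_of_getElem {i : Fin n} {k : ℕ} (hk : k < (chainL par κ i).length) :
    posOf par κ ((chainL par κ i)[k]) = k := by
  have hnode : nodeOf par κ ((chainL par κ i)[k]) = i :=
    (mem_chainL par κ).mp (List.getElem_mem hk)
  unfold posOf
  rw [hnode]
  letI : BEq (Sig n E) := instBEqOfDecidableEq
  exact (nodup_chainL par κ i).idxOf_getElem k hk

/-- Parent function on `Sig`. -/
noncomputable def pa : Sig n E → Option (Sig n E) := fun s =>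
  match s with
  | .inl (.inl i) => if i.val = 0 then none else some (prt i)
  | s => (chainL par κ (nodeOf par κ s))[posOf par κ s - 1]?

lemma pa_anc (i : Fin n) :
    pa par κ (anc (E := E) i) = if i.val = 0 then none else some (prt i) := rfl

lemma pa_nonanchor {s : Sig n E} (h : ∀ i, s ≠ anc i) :
    pa par κ s = (chainL par κ (nodeOf par κ s))[posOf par κ s - 1]? := by
  rcases s with (j | j) | d
  · exact absurd rfl (h j)
  · rfl
  · rfl

lemma pa_nonanchor_some {s : Sig n E} (h : ∀ i, s ≠ anc i) :
    ∃ t, pa par κ s = some t ∧ nodeOf par κ t = nodeOf par κ s ∧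
      posOf par κ t + 1 = posOf par κ s := by
  have hpos := posOf_pos par κ h
  have hlt : posOf par κ s - 1 < (chainL par κ (nodeOf par κ s)).length := by
    have := posOf_lt par κ s; omega
  refine ⟨(chainL par κ (nodeOf par κ s))[posOf par κ s - 1], ?_, ?_, ?_⟩
  · rw [pa_nonanchor par κ h]
    exact List.getElem?_eq_getElem hlt
  · exact (mem_chainL par κ).mp (List.getElem_mem hlt)
  · have := posOf_eq_of_getElem par κ hlt
    omega

/-- Case analysis on `pa s = some t`. -/
lemma pa_some_cases {s t : Sig n E} (h : pa par κ s = some t) :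
    (∃ i : Fin n, s = anc i ∧ i.val ≠ 0 ∧ t = prt i) ∨
      (nodeOf par κ t = nodeOf par κ s ∧ posOf par κ t + 1 = posOf par κ s) := by
  by_cases ha : ∀ i, s ≠ anc i
  · obtain ⟨t', ht', h1, h2⟩ := pa_nonanchor_some par κ ha
    rw [ht'] at h
    obtain rfl := Option.some_injective _ h
    exact Or.inr ⟨h1, h2⟩
  · push_neg at ha
    obtain ⟨i, rfl⟩ := ha
    rw [pa_anc] at h
    by_cases hi : i.val = 0
    · rw [if_pos hi] at h; exact absurd h (by simp)
    · rw [if_neg hi] at h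
      exact Or.inl ⟨i, rfl, hi, (Option.some_injective _ h).symm⟩

lemma pa_eq_none {s : Sig n E} (h : pa par κ s = none) : ∃ i : Fin n, s = anc i ∧ i.val = 0 := by
  by_cases ha : ∀ i, s ≠ anc i
  · obtain ⟨t', ht', _, _⟩ := pa_nonanchor_some par κ ha
    rw [ht'] at h; exact absurd h (by simp)
  · push_neg at ha
    obtain ⟨i, rfl⟩ := ha
    rw [pa_anc] at h
    by_cases hi : i.val = 0
    · exact ⟨i, rfl, hi⟩
    · rw [if_neg hi] at h; exact absurd h (by simp)

/-- Rank measure on `Sig`. -/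
noncomputable def msr (s : Sig n E) : ℕ :=
  (nodeOf par κ s).val * (1 + n + Fintype.card E) + posOf par κ s

lemma chain_length_le (i : Fin n) : (chainL par κ i).length ≤ 1 + n + Fintype.card E := by
  have h1 := List.length_filter_le (fun j => decide (par j = i)) (List.finRange n)
  have h2 := List.length_filter_le (fun d => decide (κ d = i)) (Finset.univ : Finset E).toList
  simp only [List.length_finRange] at h1
  simp only [Finset.length_toList, Finset.card_univ] at h2
  simp only [chainL, List.length_cons, List.length_append, List.length_map]
  omega

lemma posOf_lt_M (s : Sig n E) : posOf par κ s < 1 + n + Fintype.card E :=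
  lt_of_lt_of_le (posOf_lt par κ s) (chain_length_le par κ _)

lemma msr_dec (hpar : ∀ i : Fin n, i.val ≠ 0 → (par i).val < i.val) :
    ∀ s t : Sig n E, pa par κ s = some t → msr par κ t < msr par κ s := by
  intro s t h
  rcases pa_some_cases par κ h with ⟨i, rfl, hi, rfl⟩ | ⟨h1, h2⟩
  · unfold msr
    simp only [nodeOf_anc, nodeOf_prt]
    have h3 : (par i).val + 1 ≤ i.val := hpar i hi
    have h4 := posOf_lt_M par κ (prt (E := E) i)
    calc (par i).val * (1 + n + Fintype.card E) + posOf par κ (prt i)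
        < ((par i).val + 1) * (1 + n + Fintype.card E) := by
          rw [add_one_mul]; omega
      _ ≤ i.val * (1 + n + Fintype.card E) := Nat.mul_le_mul_right _ h3
      _ ≤ _ := Nat.le_add_right _ _
  · unfold msr
    rw [h1]
    omega

/-- Chain successor. -/
noncomputable def csucc (s : Sig n E) : Option (Sig n E) :=
  (chainL par κ (nodeOf par κ s))[posOf par κ s + 1]?

lemma children_cases {s t : Sig n E} (h : pa par κ t = some s) :
    csucc par κ s = some t ∨ ∃ i, s = prt i ∧ t = anc i := by
  rcases pa_some_cases par κ h with ⟨i, rfl, hi, rfl⟩ | ⟨h1, h2⟩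
  · exact Or.inr ⟨i, rfl, rfl⟩
  · left
    unfold csucc
    rw [h1, h2]
    rw [List.getElem?_eq_getElem (posOf_lt par κ t)]
    rw [chain_getElem_posOf]

lemma th_nbr {s t : Sig n E} (h : (pgraph (pa par κ)).Adj s t) :
    pa par κ s = some t ∨ csucc par κ s = some t ∨ ∃ i, s = prt i ∧ t = anc i := by
  rcases h.2 with h' | h'
  · exact Or.inl h'
  · exact Or.inr (children_cases par κ h')

lemma th_isTree (hn0 : 0 < n) (hpar : ∀ i : Fin n, i.val ≠ 0 → (par i).val < i.val) :
    (pgraph (pa par κ)).IsTree := by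
  refine pgraph_isTree _ (msr par κ) (anc ⟨0, hn0⟩) (fun a b h => msr_dec par κ hpar a b h) ?_
  intro a ha
  obtain ⟨i, rfl, hi⟩ := pa_eq_none par κ ha
  exact congrArg anc (Fin.ext hi)

lemma chain_reach (hpar : ∀ i : Fin n, i.val ≠ 0 → (par i).val < i.val) (S : Set (Fin n)) :
    ∀ (N : ℕ) (s : Sig n E) (hs : nodeOf par κ s ∈ S), posOf par κ s ≤ N →
      ((pgraph (pa par κ)).induce (nodeOf par κ ⁻¹' S)).Reachable ⟨s, hs⟩
        ⟨anc (nodeOf par κ s), hs⟩ := by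
  intro N
  induction N with
  | zero =>
    intro s hs hps
    by_cases hA : s = anc (nodeOf par κ s)
    · exact (Subtype.ext hA :
        (⟨s, hs⟩ : (nodeOf par κ ⁻¹' S)) = ⟨anc (nodeOf par κ s), hs⟩) ▸ Reachable.refl _
    · have hne : ∀ i, s ≠ anc i := by intro i hi; subst hi; exact hA rfl
      exact absurd (posOf_pos par κ hne) (by omega)
  | succ N ih =>
    intro s hs hps
    by_cases hA : s = anc (nodeOf par κ s)
    · exact (Subtype.ext hA :
        (⟨s, hs⟩ : (nodeOf par κ ⁻¹' S)) = ⟨anc (nodeOf par κ s), hs⟩) ▸ Reachable.refl _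
    · have hne : ∀ i, s ≠ anc i := by intro i hi; subst hi; exact hA rfl
      obtain ⟨t, hpa, h1, h2⟩ := pa_nonanchor_some par κ hne
      have ht : nodeOf par κ t ∈ S := h1 ▸ hs
      have hadj : ((pgraph (pa par κ)).induce (nodeOf par κ ⁻¹' S)).Adj ⟨s, hs⟩ ⟨t, ht⟩ := by
        simp only [comap_adj, Function.Embedding.coe_subtype]
        exact pgraph_adj _ (msr par κ) (fun a b h => msr_dec par κ hpar a b h) (Or.inl hpa)
      refine hadj.reachable.trans ?_
      have := ih t ht (by omega)
      have heq : (⟨anc (nodeOf par κ t), ht⟩ : (nodeOf par κ ⁻¹' S)) =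
          ⟨anc (nodeOf par κ s), hs⟩ := Subtype.ext (congrArg anc h1)
      exact heq ▸ this

end GVS

open SimpleGraph
set_option linter.unusedSectionVars false

namespace GVS

variable {τ : Type} [Fintype τ] [DecidableEq τ] {n : ℕ}

/-- Every edge of the tree `T` is a parent edge. -/
lemma par_edges_all (T : SimpleGraph τ) [DecidableRel T.Adj] (hTtree : T.IsTree)
    (hn : n = Fintype.card τ) (eq : Fin n ≃ τ) (par : Fin n → Fin n)
    (hpar : ∀ i : Fin n, i.val ≠ 0 → (par i).val < i.val ∧ T.Adj (eq (par i)) (eq i)) :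
    ∀ i j : Fin n, T.Adj (eq i) (eq j) →
      (i.val ≠ 0 ∧ par i = j) ∨ (j.val ≠ 0 ∧ par j = i) := by
  classical
  have hn0 : 0 < n := by
    rw [hn]; exact Fintype.card_pos_iff.mpr hTtree.isConnected.nonempty
  set F : {i : Fin n // i.val ≠ 0} → T.edgeSet :=
    fun i => ⟨s(eq (par i.1), eq i.1), T.mem_edgeSet.mpr (hpar i.1 i.2).2⟩ with hF
  have hinj : Function.Injective F := by
    rintro ⟨i, hi⟩ ⟨j, hj⟩ h
    simp only [hF, Subtype.mk.injEq, Sym2.eq_iff] at h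
    rcases h with ⟨h1, h2⟩ | ⟨h1, h2⟩
    · exact Subtype.ext (eq.injective h2)
    · have e1 : par i = j := eq.injective h1
      have e2 : i = par j := eq.injective h2
      have := (hpar i hi).1
      have := (hpar j hj).1
      rw [e1] at *
      omega
  have hcard1 : Fintype.card {i : Fin n // i.val ≠ 0} = n - 1 := by
    have : Fintype.card {i : Fin n // i.val = 0} = 1 := by
      rw [Fintype.card_eq_one_iff]
      exact ⟨⟨⟨0, hn0⟩, rfl⟩, by rintro ⟨a, ha⟩; exact Subtype.ext (Fin.ext ha)⟩
    have h2 := Fintype.card_subtype_compl (fun i : Fin n => i.val = 0)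
    simp only [this, Fintype.card_fin] at h2
    exact h2
  have hcard2 : Fintype.card T.edgeSet = n - 1 := by
    have := hTtree.card_edgeFinset
    have h3 : T.edgeFinset.card = Fintype.card T.edgeSet := Set.toFinset_card _
    omega
  have hbij : Function.Bijective F :=
    (Fintype.bijective_iff_injective_and_card F).mpr ⟨hinj, by rw [hcard1, hcard2]⟩
  intro i j hadj
  obtain ⟨⟨k, hk⟩, hFk⟩ := hbij.2 ⟨s(eq i, eq j), T.mem_edgeSet.mpr hadj⟩
  simp only [hF, Subtype.mk.injEq, Sym2.eq_iff] at hFk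
  rcases hFk with ⟨h1, h2⟩ | ⟨h1, h2⟩
  · have := eq.injective h2
    subst this
    exact Or.inr ⟨hk, eq.injective h1⟩
  · have : k = i := eq.injective h2
    subst this
    exact Or.inl ⟨hk, eq.injective h1⟩

variable {E : Type} [Fintype E] [DecidableEq E]

lemma anchor_step (par : Fin n → Fin n) (κ : E → Fin n)
    (hpar : ∀ i : Fin n, i.val ≠ 0 → (par i).val < i.val)
    {i j : Fin n} (hi0 : i.val ≠ 0) (hpi : par i = j) (S : Set (Fin n))
    (hi : i ∈ S) (hj : j ∈ S) :
    ((pgraph (pa par κ)).induce (nodeOf par κ ⁻¹' S)).Reachable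
      ⟨anc i, hi⟩ ⟨anc j, hj⟩ := by
  have hmem : nodeOf par κ (prt (E := E) i) ∈ S := by rw [nodeOf_prt, hpi]; exact hj
  have hadj : ((pgraph (pa par κ)).induce (nodeOf par κ ⁻¹' S)).Adj ⟨anc i, hi⟩ ⟨prt i, hmem⟩ := by
    simp only [comap_adj, Function.Embedding.coe_subtype]
    refine pgraph_adj _ (msr par κ) (fun a b h => msr_dec par κ hpar a b h) (Or.inl ?_)
    rw [pa_anc, if_neg hi0]
  refine hadj.reachable.trans ?_
  have := chain_reach par κ hpar S (posOf par κ (prt (E := E) i)) (prt i) hmem le_rfl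
  have heq : (⟨anc (nodeOf par κ (prt (E := E) i)), hmem⟩ : (nodeOf par κ ⁻¹' S)) =
      ⟨anc j, hj⟩ := Subtype.ext (by
    show anc (nodeOf par κ (prt i)) = anc j
    rw [nodeOf_prt, hpi])
  exact heq ▸ this

lemma anchors_reach (T : SimpleGraph τ) (eq : Fin n ≃ τ) (par : Fin n → Fin n) (κ : E → Fin n)
    (hpar : ∀ i : Fin n, i.val ≠ 0 → (par i).val < i.val)
    (hcorr : ∀ i j, T.Adj (eq i) (eq j) → (i.val ≠ 0 ∧ par i = j) ∨ (j.val ≠ 0 ∧ par j = i))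
    (X : Set τ) (a b : X) (w : (T.induce X).Walk a b) :
    ((pgraph (pa par κ)).induce (nodeOf par κ ⁻¹' {i | eq i ∈ X})).Reachable
      ⟨anc (eq.symm a.1), by simp [a.2]⟩ ⟨anc (eq.symm b.1), by simp [b.2]⟩ := by
  induction w with
  | nil => exact Reachable.refl _
  | @cons a c b h p ih =>
    refine Reachable.trans ?_ ih
    have hadjT : T.Adj (eq (eq.symm a.1)) (eq (eq.symm c.1)) := by
      simp only [Equiv.apply_symm_apply]
      exact h
    have ha : eq.symm a.1 ∈ {i | eq i ∈ X} := by simp [a.2]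
    have hc : eq.symm c.1 ∈ {i | eq i ∈ X} := by simp [c.2]
    rcases hcorr _ _ hadjT with ⟨h0, hp⟩ | ⟨h0, hp⟩
    · exact anchor_step par κ hpar h0 hp _ ha hc
    · exact (anchor_step par κ hpar h0 hp _ hc ha).symm

lemma induce_preS_connected (T : SimpleGraph τ) (eq : Fin n ≃ τ)
    (par : Fin n → Fin n) (κ : E → Fin n)
    (hpar : ∀ i : Fin n, i.val ≠ 0 → (par i).val < i.val)
    (hcorr : ∀ i j, T.Adj (eq i) (eq j) → (i.val ≠ 0 ∧ par i = j) ∨ (j.val ≠ 0 ∧ par j = i))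
    (X : Set τ) (hX : (T.induce X).Connected) :
    ((pgraph (pa par κ)).induce (nodeOf par κ ⁻¹' {i | eq i ∈ X})).Connected := by
  rw [connected_iff]
  constructor
  · rintro ⟨s, hs⟩ ⟨t, ht⟩
    refine (chain_reach par κ hpar _ _ s hs le_rfl).trans
      (Reachable.trans ?_ (chain_reach par κ hpar _ _ t ht le_rfl).symm)
    have hax : (eq (nodeOf par κ s)) ∈ X := hs
    have hbx : (eq (nodeOf par κ t)) ∈ X := ht
    obtain ⟨w⟩ := hX.preconnected ⟨_, hax⟩ ⟨_, hbx⟩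
    have := anchors_reach T eq par κ hpar hcorr X ⟨_, hax⟩ ⟨_, hbx⟩ w
    have e1 : (⟨anc (eq.symm (eq (nodeOf par κ s))), by simp [hax]⟩ :
        (nodeOf par κ ⁻¹' {i | eq i ∈ X})) = ⟨anc (nodeOf par κ s), hs⟩ :=
      Subtype.ext (congrArg anc (eq.symm_apply_apply _))
    have e2 : (⟨anc (eq.symm (eq (nodeOf par κ t))), by simp [hbx]⟩ :
        (nodeOf par κ ⁻¹' {i | eq i ∈ X})) = ⟨anc (nodeOf par κ t), ht⟩ :=
      Subtype.ext (congrArg anc (eq.symm_apply_apply _))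
    rw [e1, e2] at this
    exact this
  · obtain ⟨x⟩ := hX.nonempty
    exact ⟨⟨anc (eq.symm x.1), by simp [x.2]⟩⟩

lemma star_connected {α : Type} (H : SimpleGraph α) (Y : Set α) (c : α) (hc : c ∈ Y)
    (h : ∀ y ∈ Y, y = c ∨ H.Adj y c) : (H.induce Y).Connected := by
  rw [connected_iff]
  refine ⟨?_, ⟨⟨c, hc⟩⟩⟩
  have hr : ∀ y : Y, (H.induce Y).Reachable y ⟨c, hc⟩ := by
    rintro ⟨y, hy⟩
    rcases h y hy with rfl | hadj
    · exact Reachable.refl _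
    · exact Adj.reachable (by simpa only [comap_adj, Function.Embedding.coe_subtype] using hadj)
  exact fun a b => (hr a).trans (hr b).symm

end GVS

open SimpleGraph
set_option linter.unusedSectionVars false
set_option maxHeartbeats 1000000

namespace GVS

variable {V τ : Type} [Fintype V] [Fintype τ] [DecidableEq V] [DecidableEq τ]
variable (G : SimpleGraph V) [DecidableRel G.Adj] (Q : τ → Finset V)
variable {n : ℕ} (eq : Fin n ≃ τ) (par : Fin n → Fin n) (κ : ↥G.edgeSet → Fin n)

/-- Bags on the refined tree. -/
def Qh : Sig n ↥G.edgeSet → Finset V := fun s => Q (eq (nodeOf par κ s))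

/-- Vertex type of the split graph. -/
abbrev Wt : Type := {p : V × Sig n ↥G.edgeSet // p.1 ∈ Qh G Q eq par κ p.2}

/-- The split graph. -/
def Gbar : SimpleGraph (Wt G Q eq par κ) where
  Adj w w' := (w.1.1 = w'.1.1 ∧ (pgraph (pa par κ)).Adj w.1.2 w'.1.2) ∨
    (w.1.1 ≠ w'.1.1 ∧ w.1.2 = w'.1.2 ∧
      ∃ d : ↥G.edgeSet, w.1.2 = slt d ∧ w.1.1 ∈ (d : Sym2 V) ∧ w'.1.1 ∈ (d : Sym2 V))
  symm := ⟨by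
    rintro w w' (⟨h1, h2⟩ | ⟨h1, h2, d, h3, h4, h5⟩)
    · exact Or.inl ⟨h1.symm, h2.symm⟩
    · exact Or.inr ⟨h1.symm, h2.symm, d, h2 ▸ h3, h5, h4⟩⟩
  loopless := ⟨by
    rintro w (⟨_, h2⟩ | ⟨h1, _⟩)
    · exact h2.ne rfl
    · exact h1 rfl⟩

/-- The projection map. -/
def phi : Wt G Q eq par κ → V := fun w => w.1.1

lemma phi_surjective (hne : ∀ u : V, ∃ t : τ, u ∈ Q t) :
    Function.Surjective (phi G Q eq par κ) := by
  intro u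
  obtain ⟨t, ht⟩ := hne u
  refine ⟨⟨(u, anc (eq.symm t)), ?_⟩, rfl⟩
  simp only [Qh, nodeOf_anc, Equiv.apply_symm_apply]
  exact ht

/-- Edges between distinct fibres project to edges of `G`. -/
lemma gbar_cross {w w' : Wt G Q eq par κ} (h : (Gbar G Q eq par κ).Adj w w')
    (hne : phi G Q eq par κ w ≠ phi G Q eq par κ w') :
    G.Adj (phi G Q eq par κ w) (phi G Q eq par κ w') := by
  rcases h with ⟨h1, _⟩ | ⟨h1, _, d, _, h4, h5⟩
  · exact absurd h1 hne
  · have : (d : Sym2 V) = s(phi G Q eq par κ w, phi G Q eq par κ w') :=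
      ((Sym2.mem_and_mem_iff hne).mp ⟨h4, h5⟩)
    have hd := d.2
    rw [this] at hd
    exact hd

/-- Unique edge between adjacent fibres. -/
lemma gbar_unique (hκ : ∀ d : ↥G.edgeSet, ∀ x ∈ (d : Sym2 V), x ∈ Q (eq (κ d)))
    {u v : V} (huv : G.Adj u v) :
    ∃ w w' : Wt G Q eq par κ, phi G Q eq par κ w = u ∧ phi G Q eq par κ w' = v ∧
      (Gbar G Q eq par κ).Adj w w' ∧
      ∀ w₂ w₂' : Wt G Q eq par κ, phi G Q eq par κ w₂ = u → phi G Q eq par κ w₂' = v →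
        (Gbar G Q eq par κ).Adj w₂ w₂' → w₂ = w ∧ w₂' = w' := by
  set d : ↥G.edgeSet := ⟨s(u, v), (G.mem_edgeSet).mpr huv⟩ with hd
  have hu : u ∈ Qh G Q eq par κ (slt d) := hκ d u (by rw [hd]; exact Sym2.mem_mk_left u v)
  have hv : v ∈ Qh G Q eq par κ (slt d) := hκ d v (by rw [hd]; exact Sym2.mem_mk_right u v)
  refine ⟨⟨(u, slt d), hu⟩, ⟨(v, slt d), hv⟩, rfl, rfl, ?_, ?_⟩
  · exact Or.inr ⟨huv.ne, rfl, d, rfl, Sym2.mem_mk_left u v, Sym2.mem_mk_right u v⟩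
  · rintro ⟨⟨u₂, s₂⟩, h₂⟩ ⟨⟨v₂, s₂'⟩, h₂'⟩ rfl rfl hadj
    rcases hadj with ⟨h1, _⟩ | ⟨_, heq, d₂, hslt, hm1, hm2⟩
    · exact absurd h1 huv.ne
    · simp only at heq hslt hm1 hm2
      have hd2 : (d₂ : Sym2 V) = s(u₂, v₂) := (Sym2.mem_and_mem_iff huv.ne).mp ⟨hm1, hm2⟩
      have : d₂ = d := Subtype.ext (by rw [hd2]; rfl)
      subst this
      constructor
      · exact Subtype.ext (Prod.ext rfl hslt)
      · exact Subtype.ext (Prod.ext rfl (heq.symm.trans hslt))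

/-- Candidate "third neighbour". -/
noncomputable def thirdC (u : V) (s : Sig n ↥G.edgeSet) : V × Sig n ↥G.edgeSet :=
  match s with
  | .inl (.inr i) => (u, anc i)
  | .inr d => (if h : u ∈ (d : Sym2 V) then Sym2.Mem.other' h else u, slt d)
  | .inl (.inl _) => (u, s)

lemma gbar_degree (hpar : ∀ i : Fin n, i.val ≠ 0 → (par i).val < i.val)
    (w : Wt G Q eq par κ) : ((Gbar G Q eq par κ).neighborSet w).ncard ≤ 3 := by
  obtain ⟨⟨u, s⟩, hw⟩ := w
  set A : V × Sig n ↥G.edgeSet := (u, (pa par κ s).getD s) with hA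
  set B : V × Sig n ↥G.edgeSet := (u, (csucc par κ s).getD s) with hB
  set C := thirdC G u s with hC
  have hsub : (Gbar G Q eq par κ).neighborSet ⟨(u, s), hw⟩ ⊆
      Subtype.val ⁻¹' {A, B, C} := by
    rintro ⟨⟨v, s'⟩, hw'⟩ hadj
    rcases hadj with ⟨h1, h2⟩ | ⟨h1, h2, d, h3, h4, h5⟩
    · simp only at h1
      subst h1
      rcases th_nbr par κ h2 with h | h | ⟨i, rfl, rfl⟩
      · left; rw [hA, h]; rfl
      · right; left; rw [hB, h]; rfl
      · right; right; rw [hC]; rfl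
    · simp only at h1 h2 h3
      subst h2 h3
      right; right
      rw [hC]
      show (v, slt d) = thirdC G u (slt d)
      have hvd : v = if h : u ∈ (d : Sym2 V) then Sym2.Mem.other' h else u := by
        rw [dif_pos h4]
        have hspec := Sym2.other_spec' h4
        rw [← hspec] at h5
        rcases Sym2.mem_iff.mp h5 with h | h
        · exact absurd h.symm h1
        · exact h
      rw [thirdC]
      rw [← hvd]
  calc ((Gbar G Q eq par κ).neighborSet ⟨(u, s), hw⟩).ncard
      ≤ (Subtype.val ⁻¹' {A, B, C} :
          Set (Wt G Q eq par κ)).ncard := Set.ncard_le_ncard hsub (Set.toFinite _)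
    _ = (Subtype.val '' (Subtype.val ⁻¹' {A, B, C} : Set (Wt G Q eq par κ))).ncard :=
        (Set.ncard_image_of_injective _ Subtype.val_injective).symm
    _ ≤ ({A, B, C} : Set (V × Sig n ↥G.edgeSet)).ncard :=
        Set.ncard_le_ncard (Set.image_preimage_subset _ _) (Set.toFinite _)
    _ ≤ 3 := by
        refine le_trans (Set.ncard_insert_le _ _) ?_
        refine le_trans (Nat.add_le_add_right (Set.ncard_insert_le _ _) 1) ?_
        simp

/-- The fibre over `u` is isomorphic to an induced subgraph of the refined tree. -/
noncomputable def fiberIso (u : V) :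
    ((Gbar G Q eq par κ).induce (phi G Q eq par κ ⁻¹' {u})) ≃g
      ((pgraph (pa par κ)).induce (nodeOf par κ ⁻¹' {i : Fin n | u ∈ Q (eq i)})) where
  toFun w := ⟨w.1.1.2, by
    have hm : w.1.1.1 = u := w.2
    have hw := w.1.2
    rw [hm] at hw
    exact hw⟩
  invFun x := ⟨⟨(u, x.1), x.2⟩, rfl⟩
  left_inv := by
    rintro ⟨⟨⟨v, s⟩, hw⟩, hm⟩
    have : v = u := hm
    subst this
    rfl
  right_inv := fun x => Subtype.ext rfl
  map_rel_iff' := by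
    rintro ⟨⟨⟨v, s⟩, hw⟩, hm⟩ ⟨⟨⟨v', s'⟩, hw'⟩, hm'⟩
    have hvu : v = u := hm
    have hvu' : v' = u := hm'
    subst hvu; subst hvu'
    simp only [comap_adj, Function.Embedding.coe_subtype]
    constructor
    · intro h
      exact Or.inl ⟨rfl, h⟩
    · rintro (⟨_, h⟩ | ⟨h1, _⟩)
      · exact h
      · exact absurd rfl h1

lemma fiber_isTree
    (T : SimpleGraph τ)
    (hpar : ∀ i : Fin n, i.val ≠ 0 → (par i).val < i.val)
    (hcorr : ∀ i j, T.Adj (eq i) (eq j) → (i.val ≠ 0 ∧ par i = j) ∨ (j.val ≠ 0 ∧ par j = i))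
    (u : V) (hbag : (T.induce {t | u ∈ Q t}).Connected) :
    ((Gbar G Q eq par κ).induce (phi G Q eq par κ ⁻¹' {u})).IsTree := by
  constructor
  · rw [(fiberIso G Q eq par κ u).connected_iff]
    have := induce_preS_connected T eq par κ hpar hcorr {t | u ∈ Q t} hbag
    exact this
  · intro v c hc
    have hmapinj : Function.Injective
        (fun x : (phi G Q eq par κ ⁻¹' {u} : Set (Wt G Q eq par κ)) => x.1.1.2) := by
      rintro ⟨⟨⟨a, sa⟩, hwa⟩, hma⟩ ⟨⟨⟨b, sb⟩, hwb⟩, hmb⟩ h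
      simp only at h
      have ha : a = u := hma
      have hb : b = u := hmb
      subst ha; subst hb; subst h
      rfl
    set F : ((Gbar G Q eq par κ).induce (phi G Q eq par κ ⁻¹' {u})) →g pgraph (pa par κ) :=
      ⟨fun x => x.1.1.2, by
        rintro ⟨⟨⟨a, sa⟩, hwa⟩, hma⟩ ⟨⟨⟨b, sb⟩, hwb⟩, hmb⟩ hadj
        have ha : a = u := hma
        have hb : b = u := hmb
        subst ha; subst hb
        rcases hadj with ⟨_, h⟩ | ⟨h1, _⟩
        · exact h
        · exact absurd rfl h1⟩ with hF
    exact pgraph_isAcyclic (pa par κ) (msr par κ)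
      (fun a b h => msr_dec par κ hpar a b h) _ (hc.map (f := F) hmapinj)

/-- Bags for the decomposition of the split graph. -/
noncomputable def Qp (s : Sig n ↥G.edgeSet) : Finset (Wt G Q eq par κ) :=
  Finset.univ.filter
    (fun w => w.1.2 = s ∨ (pa par κ s = some w.1.2 ∧ w.1.1 ∈ Qh G Q eq par κ s))

lemma mem_Qp {w : Wt G Q eq par κ} {s : Sig n ↥G.edgeSet} :
    w ∈ Qp G Q eq par κ s ↔
      w.1.2 = s ∨ (pa par κ s = some w.1.2 ∧ w.1.1 ∈ Qh G Q eq par κ s) := by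
  simp [Qp]

lemma Qp_bag_connected (hpar : ∀ i : Fin n, i.val ≠ 0 → (par i).val < i.val)
    (w : Wt G Q eq par κ) :
    ((pgraph (pa par κ)).induce {s | w ∈ Qp G Q eq par κ s}).Connected := by
  refine star_connected _ _ w.1.2 ((mem_Qp G Q eq par κ).mpr (Or.inl rfl)) ?_
  intro y hy
  rcases (mem_Qp G Q eq par κ).mp hy with h | ⟨h, _⟩
  · exact Or.inl h.symm
  · exact Or.inr (pgraph_adj _ (msr par κ) (fun a b h => msr_dec par κ hpar a b h) (Or.inl h))

lemma Qp_cover {w w' : Wt G Q eq par κ} (h : (Gbar G Q eq par κ).Adj w w') :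
    ∃ s, w ∈ Qp G Q eq par κ s ∧ w' ∈ Qp G Q eq par κ s := by
  rcases h with ⟨h1, h2⟩ | ⟨_, h2, _⟩
  · rcases h2.2 with hp | hp
    · refine ⟨w.1.2, (mem_Qp G Q eq par κ).mpr (Or.inl rfl),
        (mem_Qp G Q eq par κ).mpr (Or.inr ⟨hp, ?_⟩)⟩
      rw [← h1]
      exact w.2
    · refine ⟨w'.1.2, (mem_Qp G Q eq par κ).mpr (Or.inr ⟨hp, ?_⟩),
        (mem_Qp G Q eq par κ).mpr (Or.inl rfl)⟩
      rw [h1]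
      exact w'.2
  · exact ⟨w.1.2, (mem_Qp G Q eq par κ).mpr (Or.inl rfl),
      (mem_Qp G Q eq par κ).mpr (Or.inl h2.symm)⟩

lemma Qp_card (s : Sig n ↥G.edgeSet) :
    (Qp G Q eq par κ s).card ≤ 2 * (Qh G Q eq par κ s).card := by
  have hinj : Set.InjOn (fun w : Wt G Q eq par κ =>
      (w.1.1, if w.1.2 = s then (0 : Fin 2) else 1)) (Qp G Q eq par κ s) := by
    intro w hw w₂ hw₂ heq
    simp only [Prod.mk.injEq] at heq
    obtain ⟨h1, h2⟩ := heq
    by_cases hc : w.1.2 = s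
    · rw [if_pos hc] at h2
      by_cases hc₂ : w₂.1.2 = s
      · exact Subtype.ext (Prod.ext h1 (hc.trans hc₂.symm))
      · rw [if_neg hc₂] at h2; exact absurd h2 (by simp)
    · rw [if_neg hc] at h2
      by_cases hc₂ : w₂.1.2 = s
      · rw [if_pos hc₂] at h2; exact absurd h2.symm (by simp)
      · rcases (mem_Qp G Q eq par κ).mp hw with h | ⟨h, _⟩
        · exact absurd h hc
        · rcases (mem_Qp G Q eq par κ).mp hw₂ with h' | ⟨h', _⟩
          · exact absurd h' hc₂
          · rw [h] at h'
            exact Subtype.ext (Prod.ext h1 (Option.some_injective _ h'))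
  have hmaps : ∀ w ∈ Qp G Q eq par κ s,
      (w.1.1, if w.1.2 = s then (0 : Fin 2) else 1) ∈
        (Qh G Q eq par κ s) ×ˢ (Finset.univ : Finset (Fin 2)) := by
    intro w hw
    rw [Finset.mem_product]
    refine ⟨?_, Finset.mem_univ _⟩
    rcases (mem_Qp G Q eq par κ).mp hw with h | ⟨_, h⟩
    · rw [← h]; exact w.2
    · exact h
  have := Finset.card_le_card_of_injOn _ hmaps hinj
  rwa [Finset.card_product, Finset.card_univ, Fintype.card_fin, mul_comm] at this

end GVS

/-- Lemma: good vertex splittings exist. If `G` has a tree-decomposition of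
width at most `Z`, then there is a simplification `Gbar` of `G` (each vertex of `G` is split
into a tree of vertices of degree at most 3, with exactly one edge of `Gbar` between the fibers
of adjacent vertices of `G`) admitting a tree-decomposition of width at most `2Z + 1`. -/
theorem good_vertex_splitting
    {V : Type} [Fintype V] (G : SimpleGraph V) (Z : ℕ)
    {τ : Type} [Fintype τ] (T : SimpleGraph τ) (Q : τ → Finset V)
    (hTD : IsTreeDecomp G T Q) (hw : ∀ t, (Q t).card ≤ Z + 1) :
    ∃ (W : Type) (_ : Fintype W) (Gbar : SimpleGraph W) (φ : W → V),
      Function.Surjective φ ∧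
      (∀ w : W, (Gbar.neighborSet w).ncard ≤ 3) ∧
      (∀ u : V, (Gbar.induce (φ ⁻¹' {u})).IsTree) ∧
      (∀ w w' : W, Gbar.Adj w w' → φ w ≠ φ w' → G.Adj (φ w) (φ w')) ∧
      (∀ u v : V, G.Adj u v →
        ∃ w w' : W, φ w = u ∧ φ w' = v ∧ Gbar.Adj w w' ∧
          ∀ w₂ w₂' : W, φ w₂ = u → φ w₂' = v → Gbar.Adj w₂ w₂' → w₂ = w ∧ w₂' = w') ∧
      (∃ (σ : Type) (_ : Fintype σ) (T' : SimpleGraph σ) (Q' : σ → Finset W),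
        IsTreeDecomp Gbar T' Q' ∧ ∀ t, (Q' t).card ≤ 2 * Z + 2) := by
  classical
  obtain ⟨hTtree, hbag, hcover⟩ := hTD
  letI : DecidableEq V := Classical.decEq V
  letI : DecidableEq τ := Classical.decEq τ
  letI : DecidableRel G.Adj := Classical.decRel _
  have hn0 : 0 < Fintype.card τ := Fintype.card_pos_iff.mpr hTtree.isConnected.nonempty
  obtain ⟨eq, par, hpar⟩ := exists_order T hTtree.isConnected
  have hpar' : ∀ i, i.val ≠ 0 → (par i).val < i.val := fun i h => (hpar i h).1
  have hcorr := GVS.par_edges_all T hTtree rfl eq par hpar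
  have hcd : ∀ d : ↥G.edgeSet, ∃ t : τ, ∀ x ∈ (d : Sym2 V), x ∈ Q t := by
    rintro ⟨e, he⟩
    induction e using Sym2.ind with
    | _ x y =>
      obtain ⟨t, hx, hy⟩ := hcover x y (G.mem_edgeSet.mp he)
      exact ⟨t, fun z hz => by rcases Sym2.mem_iff.mp hz with rfl | rfl; exacts [hx, hy]⟩
  choose c hc using hcd
  set κ : ↥G.edgeSet → Fin (Fintype.card τ) := fun d => eq.symm (c d) with hκdef
  have hκ : ∀ d : ↥G.edgeSet, ∀ x ∈ (d : Sym2 V), x ∈ Q (eq (κ d)) := by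
    intro d x hx
    rw [hκdef]
    simp only [Equiv.apply_symm_apply]
    exact hc d x hx
  have hne : ∀ u : V, ∃ t, u ∈ Q t := by
    intro u
    obtain ⟨⟨t, ht⟩⟩ := (hbag u).nonempty
    exact ⟨t, ht⟩
  refine ⟨GVS.Wt G Q eq par κ, inferInstance, GVS.Gbar G Q eq par κ, GVS.phi G Q eq par κ,
    GVS.phi_surjective G Q eq par κ hne,
    fun w => GVS.gbar_degree G Q eq par κ hpar' w,
    fun u => GVS.fiber_isTree G Q eq par κ T hpar' hcorr u (hbag u),
    fun w w' h hne' => GVS.gbar_cross G Q eq par κ h hne',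
    fun u v huv => GVS.gbar_unique G Q eq par κ hκ huv,
    ⟨GVS.Sig (Fintype.card τ) ↥G.edgeSet, inferInstance, pgraph (GVS.pa par κ),
      GVS.Qp G Q eq par κ,
      ⟨GVS.th_isTree par κ hn0 hpar',
        fun w => GVS.Qp_bag_connected G Q eq par κ hpar' w,
        fun w w' h => GVS.Qp_cover G Q eq par κ h⟩,
      fun s => ?_⟩⟩
  have h1 := GVS.Qp_card G Q eq par κ s
  have h2 := hw (eq (GVS.nodeOf par κ s))
  have h3 : (GVS.Qh G Q eq par κ s).card = (Q (eq (GVS.nodeOf par κ s))).card := rfl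
  omega
end

section
/- Let f_1, …, f_m be real polynomials in variables x_1, …, x_n, let 0 ≤ p ≤ n, and let π ≥ 1 bound, for every i and every monomial x^α with nonzero coefficient in f_i, the quantity Σ_{j=p+1}^n α_j. Let 0 < γ < 1, δ = 1 − (1 − γ)^π and L = ⌈log₂(1/γ)⌉. Suppose x̃ satisfies f_i(x̃) ≥ 0 for all 1 ≤ i ≤ m, x̃_j ∈ {0,1} for 1 ≤ j ≤ p and x̃_j ∈ [0,1] for p+1 ≤ j ≤ n. Then there exist values z_{j,h} ∈ {0,1} (p+1 ≤ j ≤ n, 1 ≤ h ≤ L) such that, defining x' by x'_j = x̃_j for 1 ≤ j ≤ p and x'_j = Σ_{h=1}^L 2^{-h} z_{j,h} for p+1 ≤ j ≤ n, we have f_i(x') ≥ −δ·‖f_i‖₁ for every 1 ≤ i ≤ m, and Σ_{j=1}^n c_j x'_j ≤ Σ_{j=1}^n c_j x̃_j + δ·‖c‖₁ for every c ∈ ℝ^n, where ‖c‖₁ = Σ_j |c_j|. -/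
open Finset

/-- The 1-norm of a real multivariate polynomial: the sum of the absolute values of its
coefficients. -/
noncomputable def polyNorm1 {n : ℕ} (f : MvPolynomial (Fin n) ℝ) : ℝ :=
  ∑ α ∈ f.support, |f.coeff α|


lemma myPowSub (a b γ : ℝ) (k : ℕ) (ha : 0 ≤ a) (hab : a ≤ b) (hb : b ≤ 1)
    (hg : b - a ≤ γ) (hγ1 : γ ≤ 1) : b ^ k - a ^ k ≤ 1 - (1 - γ) ^ k := by
  rcases Nat.eq_zero_or_pos k with hk | hk
  · subst hk; simp
  have hb0 : 0 ≤ b := le_trans ha hab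
  have hγ0 : 0 ≤ γ := le_trans (by linarith) hg
  rcases le_or_gt b γ with hbγ | hbγ
  · have h1 : b ^ k ≤ b := pow_le_of_le_one hb0 hb hk.ne'
    have h2 : (1 - γ) ^ k ≤ 1 - γ := pow_le_of_le_one (by linarith) (by linarith) hk.ne'
    have h3 : 0 ≤ a ^ k := pow_nonneg ha k
    linarith
  · have hbγ0 : 0 ≤ b - γ := by linarith
    have h1 : (b - γ) ^ k ≤ a ^ k := pow_le_pow_left₀ hbγ0 (by linarith) k
    have e1 := geom_sum₂_mul b (b - γ) k
    have e2 := geom_sum₂_mul (1:ℝ) (1 - γ) k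
    have hsum : (∑ i ∈ Finset.range k, b ^ i * (b - γ) ^ (k - 1 - i))
        ≤ ∑ i ∈ Finset.range k, (1:ℝ) ^ i * (1 - γ) ^ (k - 1 - i) := by
      apply Finset.sum_le_sum
      intro i _
      have hA : b ^ i ≤ 1 := pow_le_one₀ hb0 hb
      have hB : (b - γ) ^ (k - 1 - i) ≤ (1 - γ) ^ (k - 1 - i) :=
        pow_le_pow_left₀ hbγ0 (by linarith) _
      have := mul_le_mul hA hB (pow_nonneg hbγ0 _) zero_le_one
      simpa using this
    have hmul := mul_le_mul_of_nonneg_right hsum hγ0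
    have eb : b - (b - γ) = γ := by ring
    have eo : (1:ℝ) - (1 - γ) = γ := by ring
    rw [eb] at e1
    rw [eo] at e2
    rw [e1, e2] at hmul
    simp only [one_pow] at hmul
    linarith

lemma myProdSub {ι : Type*} (s : Finset ι) (A B d : ι → ℝ)
    (hA0 : ∀ j ∈ s, 0 ≤ A j) (hAB : ∀ j ∈ s, A j ≤ B j) (hB1 : ∀ j ∈ s, B j ≤ 1)
    (hd : ∀ j ∈ s, B j - A j ≤ d j) (hd1 : ∀ j ∈ s, d j ≤ 1) :
    ∏ j ∈ s, B j - ∏ j ∈ s, A j ≤ 1 - ∏ j ∈ s, (1 - d j) := by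
  induction s using Finset.cons_induction with
  | empty => simp
  | cons a s ha ih =>
    simp only [Finset.prod_cons]
    have hA0' : ∀ j ∈ s, 0 ≤ A j := fun j hj => hA0 j (Finset.mem_cons.mpr (Or.inr hj))
    have hAB' : ∀ j ∈ s, A j ≤ B j := fun j hj => hAB j (Finset.mem_cons.mpr (Or.inr hj))
    have hB1' : ∀ j ∈ s, B j ≤ 1 := fun j hj => hB1 j (Finset.mem_cons.mpr (Or.inr hj))
    have hd' : ∀ j ∈ s, B j - A j ≤ d j := fun j hj => hd j (Finset.mem_cons.mpr (Or.inr hj))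
    have hd1' : ∀ j ∈ s, d j ≤ 1 := fun j hj => hd1 j (Finset.mem_cons.mpr (Or.inr hj))
    have hih := ih hA0' hAB' hB1' hd' hd1'
    have hAa : 0 ≤ A a := hA0 a (Finset.mem_cons_self a s)
    have hABa : A a ≤ B a := hAB a (Finset.mem_cons_self a s)
    have hBa1 : B a ≤ 1 := hB1 a (Finset.mem_cons_self a s)
    have hda : B a - A a ≤ d a := hd a (Finset.mem_cons_self a s)
    have hda1 : d a ≤ 1 := hd1 a (Finset.mem_cons_self a s)
    have hda0 : 0 ≤ d a := le_trans (by linarith) hda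
    have hpA0 : 0 ≤ ∏ j ∈ s, A j := Finset.prod_nonneg hA0'
    have hpAB : ∏ j ∈ s, A j ≤ ∏ j ∈ s, B j := Finset.prod_le_prod hA0' hAB'
    have hpB1 : ∏ j ∈ s, B j ≤ 1 :=
      Finset.prod_le_one (fun j hj => le_trans (hA0' j hj) (hAB' j hj)) hB1'
    have hQ0 : 0 ≤ ∏ j ∈ s, (1 - d j) :=
      Finset.prod_nonneg (fun j hj => by linarith [hd1' j hj])
    have t1 : B a * ∏ j ∈ s, B j - A a * ∏ j ∈ s, A j
        = B a * (∏ j ∈ s, B j - ∏ j ∈ s, A j) + (B a - A a) * ∏ j ∈ s, A j := by ring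
    have t2 : B a * (∏ j ∈ s, B j - ∏ j ∈ s, A j) ≤ ∏ j ∈ s, B j - ∏ j ∈ s, A j :=
      mul_le_of_le_one_left (by linarith) hBa1
    have t3 : (B a - A a) * ∏ j ∈ s, A j ≤ d a * ∏ j ∈ s, A j :=
      mul_le_mul_of_nonneg_right hda hpA0
    have t4 : d a * ∏ j ∈ s, A j ≤ d a * (1 - (∏ j ∈ s, B j - ∏ j ∈ s, A j)) :=
      mul_le_mul_of_nonneg_left (by linarith) hda0
    have t5 : (1 - d a) * (∏ j ∈ s, B j - ∏ j ∈ s, A j)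
        ≤ (1 - d a) * (1 - ∏ j ∈ s, (1 - d j)) :=
      mul_le_mul_of_nonneg_left hih (by linarith)
    have e1 : (∏ j ∈ s, B j - ∏ j ∈ s, A j) + d a * (1 - (∏ j ∈ s, B j - ∏ j ∈ s, A j))
        = d a + (1 - d a) * (∏ j ∈ s, B j - ∏ j ∈ s, A j) := by ring
    have e2 : d a + (1 - d a) * (1 - ∏ j ∈ s, (1 - d j))
        = 1 - (1 - d a) * ∏ j ∈ s, (1 - d j) := by ring
    linarith

lemma exists_bits : ∀ (L : ℕ) (v : ℝ), 0 ≤ v → v ≤ 1 → ∃ z : ℕ → Bool,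
    (∑ h ∈ Finset.Icc 1 L, ((1:ℝ)/2) ^ h * (if z h then 1 else 0)) ≤ v ∧
    v ≤ (∑ h ∈ Finset.Icc 1 L, ((1:ℝ)/2) ^ h * (if z h then 1 else 0)) + ((1:ℝ)/2) ^ L := by
  intro L
  induction L with
  | zero =>
    intro v h0 h1
    exact ⟨fun _ => false, by simpa using h0, by simpa using h1⟩
  | succ L ih =>
    intro v h0 h1
    obtain ⟨z, hz1, hz2⟩ := ih v h0 h1
    set s := ∑ h ∈ Finset.Icc 1 L, ((1:ℝ)/2) ^ h * (if z h then 1 else 0) with hs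
    have hcongr : ∀ b : Bool,
        ∑ h ∈ Finset.Icc 1 L, ((1:ℝ)/2) ^ h *
          (if Function.update z (L+1) b h then 1 else 0) = s := by
      intro b
      apply Finset.sum_congr rfl
      intro h hh
      have hne : h ≠ L + 1 := by have := (Finset.mem_Icc.mp hh).2; omega
      rw [Function.update_of_ne hne]
    have hsplit : ∀ b : Bool,
        ∑ h ∈ Finset.Icc 1 (L+1), ((1:ℝ)/2) ^ h *
          (if Function.update z (L+1) b h then 1 else 0)
        = s + ((1:ℝ)/2) ^ (L+1) * (if b then 1 else 0) := by
      intro b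
      rw [Finset.sum_Icc_succ_top (by omega), hcongr b, Function.update_self]
    have hpow : ((1:ℝ)/2) ^ (L+1) + ((1:ℝ)/2) ^ (L+1) = ((1:ℝ)/2) ^ L := by
      rw [pow_succ]; ring
    by_cases hb : ((1:ℝ)/2) ^ (L+1) ≤ v - s
    · refine ⟨Function.update z (L+1) true, ?_, ?_⟩
      · rw [hsplit true]; norm_num; linarith
      · rw [hsplit true]; norm_num; linarith
    · refine ⟨Function.update z (L+1) false, ?_, ?_⟩
      · rw [hsplit false]; norm_num; linarith
      · rw [hsplit false]; push_neg at hb; norm_num; linarith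

/-- Lemma 7: reduction of PO to pure binary via binary expansion. Given a
feasible point `xt` of the PO instance `f₁, …, f_m` (the first `p` variables binary, the rest
in `[0,1]`), with `π` bounding the continuous degree of every monomial, `0 < γ < 1`,
`δ = 1 - (1-γ)^π` and `L = ⌈log₂(1/γ)⌉`, there are bits `z j h` such that the point `x'`
obtained by keeping the binary coordinates of `xt` and replacing each continuous coordinate by
`∑_{h=1}^{L} 2⁻ʰ z j h` satisfies `f i (x') ≥ -δ ‖f i‖₁` for all `i`, and
`c ⬝ x' ≤ c ⬝ xt + δ ‖c‖₁` for every cost vector `c`. -/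
theorem po_binary_approximation
    (n m p : ℕ) (hp : p ≤ n) (f : Fin m → MvPolynomial (Fin n) ℝ)
    (π : ℕ) (hπ : 1 ≤ π)
    (hdeg : ∀ i, ∀ α ∈ (f i).support,
      (∑ j ∈ Finset.univ.filter (fun j : Fin n => p ≤ (j : ℕ)), α j) ≤ π)
    (γ δ : ℝ) (hγ0 : 0 < γ) (hγ1 : γ < 1) (hδ : δ = 1 - (1 - γ) ^ π)
    (L : ℕ) (hL : L = ⌈Real.logb 2 (1 / γ)⌉₊)
    (xt : Fin n → ℝ)
    (hfeas : ∀ i, 0 ≤ MvPolynomial.eval xt (f i))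
    (hbin : ∀ j : Fin n, (j : ℕ) < p → xt j = 0 ∨ xt j = 1)
    (hbox : ∀ j : Fin n, p ≤ (j : ℕ) → 0 ≤ xt j ∧ xt j ≤ 1) :
    ∃ z : Fin n → ℕ → Bool,
      ∀ x' : Fin n → ℝ,
        (∀ j : Fin n, (j : ℕ) < p → x' j = xt j) →
        (∀ j : Fin n, p ≤ (j : ℕ) →
          x' j = ∑ h ∈ Finset.Icc 1 L, ((1 : ℝ) / 2) ^ h * (if z j h then 1 else 0)) →
        (∀ i, -(δ * polyNorm1 (f i)) ≤ MvPolynomial.eval x' (f i)) ∧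
        (∀ c : Fin n → ℝ, (∑ j, c j * x' j) ≤ (∑ j, c j * xt j) + δ * ∑ j, |c j|) := by
  have hγ1' : γ ≤ 1 := le_of_lt hγ1
  have hxt01 : ∀ j : Fin n, 0 ≤ xt j ∧ xt j ≤ 1 := by
    intro j
    rcases le_or_gt p (j : ℕ) with hj | hj
    · exact hbox j hj
    · rcases hbin j hj with h | h <;> rw [h] <;> norm_num
  have hδ0 : 0 ≤ δ := by
    rw [hδ]
    have := pow_le_one₀ (by linarith : (0:ℝ) ≤ 1 - γ) (by linarith : (1:ℝ) - γ ≤ 1) (n := π)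
    linarith
  have hγδ : γ ≤ δ := by
    rw [hδ]
    have h := pow_le_pow_of_le_one (by linarith : (0:ℝ) ≤ 1 - γ) (by linarith) hπ
    rw [pow_one] at h
    linarith
  have hLγ : ((1:ℝ)/2) ^ L ≤ γ := by
    have h1 : Real.logb 2 (1/γ) ≤ (L : ℝ) := by
      rw [hL]; exact Nat.le_ceil _
    have h2 : (1:ℝ)/γ ≤ 2 ^ L := by
      calc (1:ℝ)/γ = (2:ℝ) ^ Real.logb 2 (1/γ) :=
            (Real.rpow_logb (by norm_num) (by norm_num) (by positivity)).symm
        _ ≤ (2:ℝ) ^ (L:ℝ) := Real.rpow_le_rpow_of_exponent_le (by norm_num) h1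
        _ = (2:ℝ) ^ L := by rw [Real.rpow_natCast]
    rw [div_pow, one_pow, div_le_iff₀ (by positivity)]
    rw [div_le_iff₀ hγ0] at h2
    linarith
  have H : ∀ j : Fin n, ∃ zz : ℕ → Bool,
      (∑ h ∈ Finset.Icc 1 L, ((1:ℝ)/2) ^ h * (if zz h then 1 else 0)) ≤ xt j ∧
      xt j ≤ (∑ h ∈ Finset.Icc 1 L, ((1:ℝ)/2) ^ h * (if zz h then 1 else 0)) + ((1:ℝ)/2) ^ L :=
    fun j => exists_bits L (xt j) (hxt01 j).1 (hxt01 j).2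
  choose z hz1 hz2 using H
  refine ⟨z, ?_⟩
  intro x' hxb hxc
  have hx'le : ∀ j : Fin n, x' j ≤ xt j := by
    intro j
    rcases le_or_gt p (j : ℕ) with hj | hj
    · rw [hxc j hj]; exact hz1 j
    · rw [hxb j hj]
  have hx'0 : ∀ j : Fin n, 0 ≤ x' j := by
    intro j
    rcases le_or_gt p (j : ℕ) with hj | hj
    · rw [hxc j hj]
      apply Finset.sum_nonneg
      intro h _
      apply mul_nonneg (by positivity)
      split <;> norm_num
    · rw [hxb j hj]; exact (hxt01 j).1
  have hdiff : ∀ j : Fin n, xt j - x' j ≤ γ := by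
    intro j
    rcases le_or_gt p (j : ℕ) with hj | hj
    · rw [hxc j hj]; linarith [hz2 j, hLγ]
    · rw [hxb j hj]; linarith
  constructor
  · intro i
    have key : ∀ α ∈ (f i).support,
        (f i).coeff α * ∏ j, xt j ^ α j - |(f i).coeff α| * δ
          ≤ (f i).coeff α * ∏ j, x' j ^ α j := by
      intro α hα
      have hge : ∏ j, x' j ^ α j ≤ ∏ j, xt j ^ α j :=
        Finset.prod_le_prod (fun j _ => pow_nonneg (hx'0 j) _)
          (fun j _ => pow_le_pow_left₀ (hx'0 j) (hx'le j) _)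
      have hprod : ∏ j, xt j ^ α j - ∏ j, x' j ^ α j ≤ δ := by
        have hmain := myProdSub Finset.univ (fun j => x' j ^ α j) (fun j => xt j ^ α j)
            (fun j => if p ≤ (j : ℕ) then 1 - (1 - γ) ^ α j else 0)
            (fun j _ => pow_nonneg (hx'0 j) _)
            (fun j _ => pow_le_pow_left₀ (hx'0 j) (hx'le j) _)
            (fun j _ => pow_le_one₀ (hxt01 j).1 (hxt01 j).2)
            (by
              intro j _
              by_cases hj : p ≤ (j : ℕ)
              · simp only [if_pos hj]
                exact myPowSub (x' j) (xt j) γ (α j) (hx'0 j) (hx'le j) (hxt01 j).2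
                  (hdiff j) hγ1'
              · simp only [if_neg hj]
                push_neg at hj
                rw [hxb j hj]
                simp)
            (by
              intro j _
              by_cases hj : p ≤ (j : ℕ)
              · simp only [if_pos hj]
                have : (0:ℝ) ≤ (1 - γ) ^ α j := pow_nonneg (by linarith) _
                linarith
              · simp only [if_neg hj]; norm_num)
        have hQ : ∏ j : Fin n, (1 - (if p ≤ (j : ℕ) then 1 - (1 - γ) ^ α j else 0))
            = (1 - γ) ^ (∑ j ∈ Finset.univ.filter (fun j : Fin n => p ≤ (j : ℕ)), α j) := by
          rw [← Finset.prod_pow_eq_pow_sum, Finset.prod_filter]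
          apply Finset.prod_congr rfl
          intro j _
          by_cases hj : p ≤ (j : ℕ) <;> simp [hj]
        rw [hQ] at hmain
        have hmono : (1 - γ) ^ π
            ≤ (1 - γ) ^ (∑ j ∈ Finset.univ.filter (fun j : Fin n => p ≤ (j : ℕ)), α j) :=
          pow_le_pow_of_le_one (by linarith) (by linarith) (hdeg i α hα)
        beta_reduce at hmain
        rw [hδ]
        linarith
      set cc := (f i).coeff α with hcc
      have e : cc * (∏ j, xt j ^ α j) - cc * (∏ j, x' j ^ α j)
          = cc * ((∏ j, xt j ^ α j) - ∏ j, x' j ^ α j) := by ring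
      have u1 : cc * ((∏ j, xt j ^ α j) - ∏ j, x' j ^ α j)
          ≤ |cc| * ((∏ j, xt j ^ α j) - ∏ j, x' j ^ α j) :=
        mul_le_mul_of_nonneg_right (le_abs_self cc) (by linarith)
      have u2 : |cc| * ((∏ j, xt j ^ α j) - ∏ j, x' j ^ α j) ≤ |cc| * δ :=
        mul_le_mul_of_nonneg_left hprod (abs_nonneg cc)
      linarith
    have hsum := Finset.sum_le_sum key
    rw [Finset.sum_sub_distrib] at hsum
    have e1 : MvPolynomial.eval xt (f i)
        = ∑ α ∈ (f i).support, (f i).coeff α * ∏ j, xt j ^ α j :=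
      MvPolynomial.eval_eq' xt (f i)
    have e2 : MvPolynomial.eval x' (f i)
        = ∑ α ∈ (f i).support, (f i).coeff α * ∏ j, x' j ^ α j :=
      MvPolynomial.eval_eq' x' (f i)
    have e3 : ∑ α ∈ (f i).support, |(f i).coeff α| * δ = δ * polyNorm1 (f i) := by
      rw [polyNorm1, ← Finset.sum_mul, mul_comm]
    linarith [hfeas i]
  · intro c
    have hterm : ∀ j ∈ (Finset.univ : Finset (Fin n)), c j * x' j ≤ c j * xt j + δ * |c j| := by
      intro j _
      have h1 : -(c j) * (xt j - x' j) ≤ |c j| * (xt j - x' j) :=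
        mul_le_mul_of_nonneg_right (neg_le_abs (c j)) (by linarith [hx'le j])
      have h2 : |c j| * (xt j - x' j) ≤ |c j| * δ :=
        mul_le_mul_of_nonneg_left (le_trans (hdiff j) hγδ) (abs_nonneg _)
      have e : c j * x' j = c j * xt j + (-(c j)) * (xt j - x' j) := by ring
      have e2 : |c j| * δ = δ * |c j| := mul_comm _ _
      linarith
    calc ∑ j, c j * x' j ≤ ∑ j, (c j * xt j + δ * |c j|) := Finset.sum_le_sum hterm
      _ = (∑ j, c j * xt j) + δ * ∑ j, |c j| := by
          rw [Finset.sum_add_distrib, Finset.mul_sum]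
end

section
/- Suppose that for 1 ≤ k ≤ r we have real numbers u_k ≥ 0, v_k ≥ 0 with u_k + v_k ≤ 1, and natural numbers q_k. Then Π_{k=1}^r (u_k + v_k)^{q_k} − Π_{k=1}^r u_k^{q_k} ≤ 1 − Π_{k=1}^r (1 − v_k)^{q_k}. -/
lemma key_prod_diff {ι : Type*} (s : Finset ι) (a b : ι → ℝ)
    (hb : ∀ i ∈ s, 0 ≤ b i) (hba : ∀ i ∈ s, b i ≤ a i) (ha1 : ∀ i ∈ s, a i ≤ 1) :
    (∏ i ∈ s, a i) - (∏ i ∈ s, b i) ≤ 1 - ∏ i ∈ s, (1 - (a i - b i)) := by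
  induction s using Finset.cons_induction with
  | empty => simp
  | cons i s hi ih =>
    have hb' : ∀ j ∈ s, 0 ≤ b j := fun j hj => hb j (Finset.mem_cons_of_mem hj)
    have hba' : ∀ j ∈ s, b j ≤ a j := fun j hj => hba j (Finset.mem_cons_of_mem hj)
    have ha1' : ∀ j ∈ s, a j ≤ 1 := fun j hj => ha1 j (Finset.mem_cons_of_mem hj)
    have hAB := ih hb' hba' ha1'
    have hB0 : 0 ≤ ∏ j ∈ s, b j := Finset.prod_nonneg hb'
    have hBA : (∏ j ∈ s, b j) ≤ ∏ j ∈ s, a j := Finset.prod_le_prod hb' hba'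
    have hBC : (∏ j ∈ s, b j) ≤ ∏ j ∈ s, (1 - (a j - b j)) :=
      Finset.prod_le_prod hb' (fun j hj => by linarith [ha1' j hj])
    have hbi := hb i (Finset.mem_cons_self i s)
    have hbai := hba i (Finset.mem_cons_self i s)
    have hai := ha1 i (Finset.mem_cons_self i s)
    rw [Finset.prod_cons, Finset.prod_cons, Finset.prod_cons]
    nlinarith [mul_nonneg (by linarith : (0:ℝ) ≤ 1 - a i)
        (by linarith : (0:ℝ) ≤ (∏ j ∈ s, a j) - ∏ j ∈ s, b j),
      mul_nonneg (by linarith : (0:ℝ) ≤ a i - b i)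
        (by linarith : (0:ℝ) ≤ (∏ j ∈ s, (1 - (a j - b j))) - ∏ j ∈ s, b j),
      mul_le_mul_of_nonneg_left hAB (by linarith : (0:ℝ) ≤ a i)]

/-- Lemma 6, technical product inequality. If `0 ≤ u k`, `0 ≤ v k` and
`u k + v k ≤ 1` for all `k`, then
`∏ (u k + v k) ^ q k - ∏ (u k) ^ q k ≤ 1 - ∏ (1 - v k) ^ q k`. -/
theorem product_difference_bound (r : ℕ) (u v : Fin r → ℝ) (q : Fin r → ℕ)
    (hu : ∀ k, 0 ≤ u k) (hv : ∀ k, 0 ≤ v k) (huv : ∀ k, u k + v k ≤ 1) :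
    (∏ k, (u k + v k) ^ q k) - (∏ k, u k ^ q k) ≤ 1 - ∏ k, (1 - v k) ^ q k := by
  have h := key_prod_diff (ι := Σ k : Fin r, Fin (q k)) Finset.univ
    (fun x => u x.1 + v x.1) (fun x => u x.1)
    (fun x _ => hu x.1) (fun x _ => le_add_of_nonneg_right (hv x.1)) (fun x _ => huv x.1)
  have hrw : ∀ f : Fin r → ℝ, (∏ x : Σ k : Fin r, Fin (q k), f x.1) = ∏ k, f k ^ q k := by
    intro f
    rw [← Finset.univ_sigma_univ, Finset.prod_sigma]
    simp [Finset.prod_const]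
  have h1 := hrw (fun k => u k + v k)
  have h2 := hrw u
  have h3 := hrw (fun k => 1 - v k)
  rw [h1, h2] at h
  convert h using 2
  rw [← h3]
  congr 1
  ext x
  ring
end

section
/- Let q ≥ 0 and π ≥ 1 be integers, let 0 < γ < 1 and set δ = 1 − (1 − γ)^π. Suppose s, x ∈ ℝ^q satisfy 0 ≤ s_j ≤ x_j ≤ min(s_j + γ, 1) for every 1 ≤ j ≤ q, and let α ∈ ℕ^q with Σ_{j=1}^q α_j ≤ π. Then Π_{j=1}^q s_j^{α_j} ≤ Π_{j=1}^q x_j^{α_j} ≤ Π_{j=1}^q s_j^{α_j} + δ. -/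
/-- Combining lemma: if `0 ≤ bᵢ ≤ aᵢ ≤ 1` and `aᵢ - bᵢ ≤ 1 - cᵢ` with `0 ≤ cᵢ ≤ 1`,
then the same holds for the products. -/
lemma monomial_pair (a₁ b₁ c₁ a₂ b₂ c₂ : ℝ)
    (hb₁ : 0 ≤ b₁) (hba₁ : b₁ ≤ a₁) (ha₁ : a₁ ≤ 1) (hc₁0 : 0 ≤ c₁) (hc₁1 : c₁ ≤ 1)
    (hd₁ : a₁ - b₁ ≤ 1 - c₁)
    (hb₂ : 0 ≤ b₂) (hba₂ : b₂ ≤ a₂) (ha₂ : a₂ ≤ 1) (hc₂0 : 0 ≤ c₂) (hc₂1 : c₂ ≤ 1)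
    (hd₂ : a₂ - b₂ ≤ 1 - c₂) :
    0 ≤ b₁ * b₂ ∧ b₁ * b₂ ≤ a₁ * a₂ ∧ a₁ * a₂ ≤ 1 ∧
      a₁ * a₂ - b₁ * b₂ ≤ 1 - c₁ * c₂ := by
  have h0 : 0 ≤ b₁ * b₂ := mul_nonneg hb₁ hb₂
  have h1 : b₁ * b₂ ≤ a₁ * a₂ :=
    mul_le_mul hba₁ hba₂ hb₂ (le_trans hb₁ hba₁)
  have h2 : a₁ * a₂ ≤ 1 := by nlinarith
  refine ⟨h0, h1, h2, ?_⟩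
  nlinarith [mul_nonneg hc₁0 (sub_nonneg.2 hd₂), mul_nonneg (sub_nonneg.2 hc₁1) (sub_nonneg.2 ha₂),
    mul_nonneg (sub_nonneg.2 hd₁) hb₂, mul_nonneg (sub_nonneg.2 hba₂) (sub_nonneg.2 ha₁)]

lemma monomial_pow (γ s x : ℝ) (hγ0 : 0 ≤ γ) (hγ1 : γ ≤ 1)
    (hs : 0 ≤ s) (hsx : s ≤ x) (hx : x ≤ 1) (hd : x - s ≤ γ) (k : ℕ) :
    0 ≤ s ^ k ∧ s ^ k ≤ x ^ k ∧ x ^ k ≤ 1 ∧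
      x ^ k - s ^ k ≤ 1 - (1 - γ) ^ k := by
  induction k with
  | zero => norm_num
  | succ n ih =>
    obtain ⟨h0, h1, h2, h3⟩ := ih
    have hpow0 : (0:ℝ) ≤ (1 - γ) ^ n := pow_nonneg (by linarith) n
    have hpow1 : (1 - γ) ^ n ≤ 1 := pow_le_one₀ (by linarith) (by linarith)
    have := monomial_pair (x ^ n) (s ^ n) ((1 - γ) ^ n) x s (1 - γ)
      h0 h1 h2 hpow0 hpow1 h3 hs hsx hx (by linarith) (by linarith) (by linarith)
    simpa [pow_succ] using this

lemma monomial_prod (q : ℕ) (γ : ℝ) (hγ0 : 0 ≤ γ) (hγ1 : γ ≤ 1)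
    (s x : Fin q → ℝ) (h : ∀ j, 0 ≤ s j ∧ s j ≤ x j ∧ x j ≤ min (s j + γ) 1)
    (α : Fin q → ℕ) (t : Finset (Fin q)) :
    0 ≤ (∏ j ∈ t, s j ^ α j) ∧ (∏ j ∈ t, s j ^ α j) ≤ (∏ j ∈ t, x j ^ α j) ∧
      (∏ j ∈ t, x j ^ α j) ≤ 1 ∧
      (∏ j ∈ t, x j ^ α j) - (∏ j ∈ t, s j ^ α j) ≤ 1 - (1 - γ) ^ (∑ j ∈ t, α j) := by
  induction t using Finset.cons_induction with
  | empty => simp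
  | cons j t hj ih =>
    obtain ⟨h0, h1, h2, h3⟩ := ih
    obtain ⟨hs, hsx, hx⟩ := h j
    have hpowj := monomial_pow γ (s j) (x j) hγ0 hγ1 hs hsx
      (le_trans hx (min_le_right _ _))
      (by have := le_trans hx (min_le_left _ _); linarith) (α j)
    obtain ⟨p0, p1, p2, p3⟩ := hpowj
    have hc0 : (0:ℝ) ≤ (1 - γ) ^ (α j) := pow_nonneg (by linarith) _
    have hc1 : (1 - γ) ^ (α j) ≤ 1 := pow_le_one₀ (by linarith) (by linarith)
    have hc0' : (0:ℝ) ≤ (1 - γ) ^ (∑ i ∈ t, α i) := pow_nonneg (by linarith) _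
    have hc1' : (1 - γ) ^ (∑ i ∈ t, α i) ≤ 1 := pow_le_one₀ (by linarith) (by linarith)
    have := monomial_pair (x j ^ α j) (s j ^ α j) ((1 - γ) ^ (α j))
      (∏ i ∈ t, x i ^ α i) (∏ i ∈ t, s i ^ α i) ((1 - γ) ^ (∑ i ∈ t, α i))
      p0 p1 p2 hc0 hc1 p3 h0 h1 h2 hc0' hc1' h3
    simpa [Finset.prod_insert hj, Finset.sum_insert hj, pow_add] using this

/-- monomial approximation inequality. If `0 ≤ s j ≤ x j ≤ min (s j + γ) 1`
for all `j`, `0 < γ < 1`, `δ = 1 - (1 - γ) ^ π` with `π ≥ 1`, and `∑ α j ≤ π`, then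
`∏ s j ^ α j ≤ ∏ x j ^ α j ≤ ∏ s j ^ α j + δ`. -/
theorem monomial_approximation (q π : ℕ) (hπ : 1 ≤ π) (γ δ : ℝ)
    (hγ0 : 0 < γ) (hγ1 : γ < 1) (hδ : δ = 1 - (1 - γ) ^ π)
    (s x : Fin q → ℝ) (h : ∀ j, 0 ≤ s j ∧ s j ≤ x j ∧ x j ≤ min (s j + γ) 1)
    (α : Fin q → ℕ) (hα : (∑ j, α j) ≤ π) :
    (∏ j, s j ^ α j) ≤ (∏ j, x j ^ α j) ∧
    (∏ j, x j ^ α j) ≤ (∏ j, s j ^ α j) + δ := by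
  obtain ⟨h0, h1, h2, h3⟩ := monomial_prod q γ hγ0.le hγ1.le s x h α Finset.univ
  refine ⟨h1, ?_⟩
  have hmono : (1 - γ) ^ π ≤ (1 - γ) ^ (∑ j, α j) :=
    pow_le_pow_of_le_one (by linarith) (by linarith) hα
  rw [hδ]; linarith
end

section
/- Let n ≥ 2 be an integer, let a_1, …, a_n be positive integers, let S be a positive integer with 2S = Σ_{j=1}^n a_j, let M = 4nS, and let ε be a real number with 0 < ε < 1. Suppose x̂, ŷ ∈ ℝ^n satisfy 0 ≤ x̂_j ≤ 1 and 0 ≤ ŷ_j ≤ 1 for all j, together with: |M·S·ŷ_1 − M·a_1·x̂_1| ≤ ε; |M·S·ŷ_i − M·a_i·x̂_i − M·S·ŷ_{i−1}| ≤ ε for every 2 ≤ i ≤ n; |M·ŷ_n − M| ≤ ε; and M·x̂_j·(1 − x̂_j) ≤ ε for every 1 ≤ j ≤ n. Define x̃ ∈ {0,1}^n by x̃_j = 1 if x̂_j ≥ 1/2 and x̃_j = 0 otherwise. Then Σ_{j=1}^n a_j x̃_j = S. -/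
open Finset

/-- hardness reduction: approximate solutions of the subset-sum encoding
round to exact subset-sum solutions. Let `a₁, …, a_n` be positive integers summing to `2S`,
`M = 4nS`, and `0 < ε < 1`. If `(x̂, ŷ) ∈ [0,1]ⁿ × [0,1]ⁿ` satisfies the polynomial encoding of
the subset-sum instance within additive error `ε` in each constraint, then rounding each `x̂ j`
to the nearest integer gives a 0/1 vector `x̃` with `∑ a j * x̃ j = S`. -/
theorem subset_sum_rounding
    (n : ℕ) (hn : 2 ≤ n) (a : Fin n → ℕ) (ha : ∀ j, 0 < a j)
    (S : ℕ) (hS : 0 < S) (hsum : 2 * S = ∑ j, a j)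
    (M : ℕ) (hM : M = 4 * n * S)
    (ε : ℝ) (hε0 : 0 < ε) (hε1 : ε < 1)
    (xh yh : Fin n → ℝ)
    (hx01 : ∀ j, 0 ≤ xh j ∧ xh j ≤ 1) (hy01 : ∀ j, 0 ≤ yh j ∧ yh j ≤ 1)
    (h1 : |(M : ℝ) * S * yh ⟨0, by omega⟩ -
            (M : ℝ) * (a ⟨0, by omega⟩ : ℝ) * xh ⟨0, by omega⟩| ≤ ε)
    (h2 : ∀ i : Fin n, 1 ≤ (i : ℕ) →
      |(M : ℝ) * S * yh i - (M : ℝ) * (a i : ℝ) * xh i -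
        (M : ℝ) * S * yh ⟨(i : ℕ) - 1, Nat.lt_of_le_of_lt (Nat.sub_le _ _) i.isLt⟩| ≤ ε)
    (h3 : |(M : ℝ) * yh ⟨n - 1, by omega⟩ - (M : ℝ)| ≤ ε)
    (h4 : ∀ j, (M : ℝ) * xh j * (1 - xh j) ≤ ε)
    (xt : Fin n → ℕ)
    (hxt : ∀ j, ((1 : ℝ) / 2 ≤ xh j → xt j = 1) ∧ (xh j < (1 : ℝ) / 2 → xt j = 0)) :
    (∑ j, a j * xt j) = S := by
  have hMpos : 0 < M := by subst hM; positivity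
  have hMR : (0:ℝ) < M := by exact_mod_cast hMpos
  have hnR : (2:ℝ) ≤ n := by exact_mod_cast hn
  have hSR : (1:ℝ) ≤ S := by exact_mod_cast hS
  have hMeq : (M:ℝ) = 4 * n * S := by rw [hM]; push_cast; ring
  -- rounding bound
  have hround : ∀ j, (M:ℝ) * |xh j - (xt j : ℝ)| ≤ 2 * ε := by
    intro j
    obtain ⟨hx0, hx1⟩ := hx01 j
    rcases lt_or_ge (xh j) (1/2) with h | h
    · rw [(hxt j).2 h]; push_cast
      rw [sub_zero, abs_of_nonneg hx0]
      nlinarith [h4 j, mul_nonneg (mul_nonneg hMR.le hx0) (by linarith : (0:ℝ) ≤ 1 - 2 * xh j)]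
    · rw [(hxt j).1 h]; push_cast
      rw [abs_of_nonpos (by linarith : xh j - 1 ≤ 0)]
      nlinarith [h4 j, mul_nonneg (mul_nonneg hMR.le (by linarith : (0:ℝ) ≤ 1 - xh j))
        (by linarith : (0:ℝ) ≤ 2 * xh j - 1)]
  -- telescoping
  have key : ∀ k, ∀ hk : k < n,
      |(M:ℝ) * S * yh ⟨k, hk⟩ -
        ∑ j ∈ range (k+1), (if h : j < n then (M:ℝ) * (a ⟨j, h⟩ : ℝ) * xh ⟨j, h⟩ else 0)|
        ≤ ((k:ℝ) + 1) * ε := by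
    intro k
    induction k with
    | zero =>
      intro hk
      rw [sum_range_one, dif_pos hk]
      norm_num
      exact h1
    | succ k ih =>
      intro hk
      have hk' : k < n := Nat.lt_of_succ_lt hk
      have ihk := ih hk'
      have h2' : |(M:ℝ) * S * yh ⟨k+1, hk⟩ - (M:ℝ) * (a ⟨k+1, hk⟩ : ℝ) * xh ⟨k+1, hk⟩ -
          (M:ℝ) * S * yh ⟨k, hk'⟩| ≤ ε := h2 ⟨k+1, hk⟩ (by simp)
      rw [sum_range_succ, dif_pos hk]
      have hrw : (M:ℝ) * S * yh ⟨k+1, hk⟩ -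
          ((∑ j ∈ range (k+1), (if h : j < n then (M:ℝ) * (a ⟨j, h⟩ : ℝ) * xh ⟨j, h⟩ else 0))
            + (M:ℝ) * (a ⟨k+1, hk⟩ : ℝ) * xh ⟨k+1, hk⟩) =
          ((M:ℝ) * S * yh ⟨k+1, hk⟩ - (M:ℝ) * (a ⟨k+1, hk⟩ : ℝ) * xh ⟨k+1, hk⟩ -
            (M:ℝ) * S * yh ⟨k, hk'⟩) +
          ((M:ℝ) * S * yh ⟨k, hk'⟩ -
            ∑ j ∈ range (k+1), (if h : j < n then (M:ℝ) * (a ⟨j, h⟩ : ℝ) * xh ⟨j, h⟩ else 0)) := by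
        ring
      rw [hrw]
      calc |_ + _| ≤ _ + _ := abs_add_le _ _
        _ ≤ ((k:ℝ) + 1 + 1) * ε := by push_cast; linarith
        _ = ((k:ℝ) + 1) * ε + ε := by ring
        _ ≤ (((k:ℕ)+1 : ℕ) + 1 : ℝ) * ε := by push_cast; linarith
  have hk : n - 1 < n := by omega
  have key' := key (n-1) hk
  rw [show n - 1 + 1 = n from by omega] at key'
  have hcoef : ((n-1:ℕ):ℝ) + 1 = (n:ℝ) := by
    have h1n : 1 ≤ n := by omega
    push_cast [h1n]; ring
  rw [hcoef] at key'
  have hsum_f : ∑ j ∈ range n, (if h : j < n then (M:ℝ) * (a ⟨j, h⟩ : ℝ) * xh ⟨j, h⟩ else 0)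
      = (M:ℝ) * ∑ i, (a i : ℝ) * xh i := by
    rw [mul_sum, ← Fin.sum_univ_eq_sum_range]
    refine Finset.sum_congr rfl fun i _ => ?_
    rw [dif_pos i.isLt]
    exact mul_assoc _ _ _
  rw [hsum_f] at key'
  have h3a : |(M:ℝ) * yh ⟨n-1, hk⟩ - (M:ℝ)| ≤ ε := h3
  have h3' : |(M:ℝ) * S * yh ⟨n-1, hk⟩ - (M:ℝ) * S| ≤ (S:ℝ) * ε := by
    have : (M:ℝ) * S * yh ⟨n-1, hk⟩ - (M:ℝ) * S = (S:ℝ) * ((M:ℝ) * yh ⟨n-1, hk⟩ - (M:ℝ)) := by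
      ring
    rw [this, abs_mul, abs_of_nonneg (by positivity : (0:ℝ) ≤ (S:ℝ))]
    exact mul_le_mul_of_nonneg_left h3a (by positivity)
  have big : |(M:ℝ) * ∑ i, (a i : ℝ) * xh i - (M:ℝ) * S| ≤ (n:ℝ) * ε + (S:ℝ) * ε := by
    have hrw : (M:ℝ) * ∑ i, (a i : ℝ) * xh i - (M:ℝ) * S =
        -((M:ℝ) * S * yh ⟨n-1, hk⟩ - (M:ℝ) * ∑ i, (a i : ℝ) * xh i) +
        ((M:ℝ) * S * yh ⟨n-1, hk⟩ - (M:ℝ) * S) := by ring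
    rw [hrw]
    calc |_ + _| ≤ _ + _ := abs_add_le _ _
      _ ≤ (n:ℝ) * ε + (S:ℝ) * ε := by rw [abs_neg]; linarith
  -- rounding difference
  have hdiff : |(M:ℝ) * ∑ i, (a i : ℝ) * (xt i : ℝ) - (M:ℝ) * ∑ i, (a i : ℝ) * xh i|
      ≤ 4 * (S:ℝ) * ε := by
    have hrw : (M:ℝ) * ∑ i, (a i : ℝ) * (xt i : ℝ) - (M:ℝ) * ∑ i, (a i : ℝ) * xh i
        = ∑ i, (a i : ℝ) * ((M:ℝ) * ((xt i : ℝ) - xh i)) := by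
      rw [mul_sum, mul_sum, ← Finset.sum_sub_distrib]
      exact Finset.sum_congr rfl fun i _ => by ring
    rw [hrw]
    calc |∑ i, (a i : ℝ) * ((M:ℝ) * ((xt i : ℝ) - xh i))|
        ≤ ∑ i, |(a i : ℝ) * ((M:ℝ) * ((xt i : ℝ) - xh i))| := Finset.abs_sum_le_sum_abs _ _
      _ ≤ ∑ i, (a i : ℝ) * (2 * ε) := by
          refine Finset.sum_le_sum fun i _ => ?_
          rw [abs_mul, abs_of_nonneg (by positivity : (0:ℝ) ≤ (a i : ℝ))]
          refine mul_le_mul_of_nonneg_left ?_ (by positivity)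
          rw [abs_mul, abs_of_nonneg hMR.le, abs_sub_comm]
          exact hround i
      _ = (∑ i, (a i : ℝ)) * (2 * ε) := by rw [← Finset.sum_mul]
      _ = 4 * (S:ℝ) * ε := by
          have : (∑ i, (a i : ℝ)) = 2 * (S:ℝ) := by
            rw [← Nat.cast_sum, ← hsum]; push_cast; ring
          rw [this]; ring
  -- combine
  set c : ℕ := ∑ j, a j * xt j with hc
  have hcast : (c:ℝ) = ∑ i, (a i : ℝ) * (xt i : ℝ) := by rw [hc]; push_cast; ring
  have htot : (M:ℝ) * |(c:ℝ) - (S:ℝ)| ≤ ((n:ℝ) + 5 * S) * ε := by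
    have hrw2 : (M:ℝ) * ((c:ℝ) - (S:ℝ)) =
        ((M:ℝ) * ∑ i, (a i : ℝ) * (xt i : ℝ) - (M:ℝ) * ∑ i, (a i : ℝ) * xh i) +
        ((M:ℝ) * ∑ i, (a i : ℝ) * xh i - (M:ℝ) * S) := by
      rw [hcast]; ring
    have : |(M:ℝ) * ((c:ℝ) - (S:ℝ))| ≤ ((n:ℝ) + 5 * S) * ε := by
      rw [hrw2]
      calc |_ + _| ≤ _ + _ := abs_add_le _ _
        _ ≤ ((n:ℝ) + 5 * S) * ε := by linarith
    rwa [abs_mul, abs_of_nonneg hMR.le] at this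
  have hlt : |(c:ℝ) - (S:ℝ)| < 1 := by
    by_contra hcon
    push_neg at hcon
    have h5 : ((n:ℝ) + 5 * S) * ε < (n:ℝ) + 5 * S := by
      have : (0:ℝ) < (n:ℝ) + 5 * S := by linarith
      nlinarith
    have h6 : (n:ℝ) + 5 * S < (M:ℝ) := by
      rw [hMeq]; nlinarith
    have h9 : (M:ℝ) * 1 ≤ (M:ℝ) * |(c:ℝ) - (S:ℝ)| :=
      mul_le_mul_of_nonneg_left hcon hMR.le
    linarith
  rcases abs_lt.mp hlt with ⟨hl, hr⟩
  have hcS1 : (c:ℝ) < (S:ℝ) + 1 := by linarith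
  have hScS : (S:ℝ) < (c:ℝ) + 1 := by linarith
  have h7 : c < S + 1 := by exact_mod_cast hcS1
  have h8 : S < c + 1 := by exact_mod_cast hScS
  omega
end
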